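/- Under the standing hypotheses (G is a finite simple C4-free graph with at least one vertex, a, b : V(G) → ℕ satisfy a(x) ≥ 2 and b(x) ≥ 2 for all x, d_G(x) = a(x) + b(x) − 1 for every vertex x, and G has no feasible pair), there exists an (a,b)-partition of V(G), that is, a partition (A, B) with A (a−1)-degenerate and B (b−1)-degenerate. -/

import Mathlib

open Finset
open scoped Classical

variable {V : Type*}

/-- `nbrIn G A x` is the number of neighbors of `x` lying in `A`, i.e. `d_A(x)`. -/
noncomputable def nbrIn (G : SimpleGraph V) (A : Finset V) (x : V) : ℕ :=
  (A.filter fun y => G.Adj x y).card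

/-- `G` contains no cycle of length four: there are no four distinct vertices
`w,x,y,z` with `wx, xy, yz, zw` all edges. -/
def C4Free (G : SimpleGraph V) : Prop :=
  ∀ w x y z : V, w ≠ x → w ≠ y → w ≠ z → x ≠ y → x ≠ z → y ≠ z →
    ¬(G.Adj w x ∧ G.Adj x y ∧ G.Adj y z ∧ G.Adj z w)

/-- `A` is `f`-good: every vertex of `A` has at least `f u` neighbors in `A`. -/
def IsGood (G : SimpleGraph V) (f : V → ℕ) (A : Finset V) : Prop :=
  ∀ u ∈ A, f u ≤ nbrIn G A u

/-- `A` is `g`-degenerate: every non-empty subset `H ⊆ A` has a vertex `u`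
with `d_H(u) ≤ g u`. -/
def IsDegenerate (G : SimpleGraph V) (g : V → ℤ) (A : Finset V) : Prop :=
  ∀ H ⊆ A, H.Nonempty → ∃ u ∈ H, (nbrIn G H u : ℤ) ≤ g u

/-- `(A,B)` is a partition of the vertex set: disjoint, non-empty, covering. -/
def IsPartition [Fintype V] (A B : Finset V) : Prop :=
  Disjoint A B ∧ A.Nonempty ∧ B.Nonempty ∧ A ∪ B = Finset.univ

/-- `(A,B)` is a feasible pair: disjoint non-empty sets with `A` being `a`-good
and `B` being `b`-good. -/
def FeasiblePair (G : SimpleGraph V) (a b : V → ℕ) (A B : Finset V) : Prop :=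
  Disjoint A B ∧ A.Nonempty ∧ B.Nonempty ∧ IsGood G a A ∧ IsGood G b B

/-- `(A,B)` is an `(a,b)`-partition: a partition with `A` being `(a-1)`-degenerate
and `B` being `(b-1)`-degenerate. -/
def ABPartition [Fintype V] (G : SimpleGraph V) (a b : V → ℕ) (A B : Finset V) : Prop :=
  IsPartition A B ∧ IsDegenerate G (fun x => (a x : ℤ) - 1) A ∧
    IsDegenerate G (fun x => (b x : ℤ) - 1) B

/-- The number of edges of the subgraph of `G` induced on `A`. -/
noncomputable def edgesIn (G : SimpleGraph V) (A : Finset V) : ℕ :=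
  ((A ×ˢ A).filter fun p => G.Adj p.1 p.2).card / 2

/-- The weight `w(A,B) = |E(G[A])| + |E(G[B])| + Σ_{x∈A} b(x) + Σ_{x∈B} a(x)`. -/
noncomputable def weight (G : SimpleGraph V) (a b : V → ℕ) (A B : Finset V) : ℕ :=
  edgesIn G A + edgesIn G B + ∑ x ∈ A, b x + ∑ x ∈ B, a x

/-- `(A,B)` belongs to `𝒫`: it is an `(a,b)`-partition of maximum weight among
all `(a,b)`-partitions. -/
def MaxAB [Fintype V] (G : SimpleGraph V) (a b : V → ℕ) (A B : Finset V) : Prop :=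
  ABPartition G a b A B ∧
    ∀ A' B' : Finset V, ABPartition G a b A' B' → weight G a b A' B' ≤ weight G a b A B

/-- `starSet G f A` is `A* = {x ∈ A : d_A(x) ≤ f(x) - 1}`. -/
noncomputable def starSet (G : SimpleGraph V) (f : V → ℕ) (A : Finset V) : Finset V :=
  A.filter fun x => nbrIn G A x < f x

private lemma nbrIn_mono (G : SimpleGraph V) {H A : Finset V} (h : H ⊆ A) (u : V) :
    nbrIn G H u ≤ nbrIn G A u :=
  Finset.card_le_card (Finset.filter_subset_filter _ h)

private lemma prodcard_eq (G : SimpleGraph V) (s : Finset V) :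
    ((s ×ˢ s).filter fun p => G.Adj p.1 p.2).card = ∑ x ∈ s, nbrIn G s x := by
  rw [Finset.card_filter, Finset.sum_product]
  unfold nbrIn
  exact Finset.sum_congr rfl fun x _ => (Finset.card_filter _ _).symm

private lemma nbrIn_insert_self (G : SimpleGraph V) (u : V) (B : Finset V) :
    nbrIn G (insert u B) u = nbrIn G B u := by
  unfold nbrIn
  rw [Finset.filter_insert]
  simp [G.irrefl]

private lemma prodcard_insert (G : SimpleGraph V) {u : V} {B : Finset V} (hu : u ∉ B) :
    (((insert u B) ×ˢ (insert u B)).filter fun p => G.Adj p.1 p.2).card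
      = ((B ×ˢ B).filter fun p => G.Adj p.1 p.2).card + 2 * nbrIn G B u := by
  rw [prodcard_eq, prodcard_eq, Finset.sum_insert hu, nbrIn_insert_self]
  have h1 : ∀ x ∈ B, nbrIn G (insert u B) x = nbrIn G B x + (if G.Adj x u then 1 else 0) := by
    intro x hx
    unfold nbrIn
    rw [Finset.filter_insert]
    by_cases h : G.Adj x u
    · rw [if_pos h, Finset.card_insert_of_notMem (by simp [hu]), if_pos h]
    · rw [if_neg h, if_neg h, Nat.add_zero]
  rw [Finset.sum_congr rfl h1, Finset.sum_add_distrib]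
  have h2 : (∑ x ∈ B, if G.Adj x u then 1 else 0) = nbrIn G B u := by
    unfold nbrIn
    rw [Finset.card_filter]
    exact Finset.sum_congr rfl (fun x _ => by simp [G.adj_comm])
  rw [h2]; ring

private lemma even_prodcard (G : SimpleGraph V) (s : Finset V) :
    Even (((s ×ˢ s).filter fun p => G.Adj p.1 p.2).card) := by
  classical
  induction s using Finset.induction_on with
  | empty => simp
  | insert _ _ hu ih =>
    rw [prodcard_insert G hu]
    exact ih.add (even_two_mul _)

private lemma edgesIn_insert (G : SimpleGraph V) {u : V} {B : Finset V} (hu : u ∉ B) :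
    edgesIn G (insert u B) = edgesIn G B + nbrIn G B u := by
  unfold edgesIn
  rw [prodcard_insert G hu]
  obtain ⟨k, hk⟩ := even_prodcard G B
  omega

private lemma weight_comm (G : SimpleGraph V) (a b : V → ℕ) (A B : Finset V) :
    weight G a b A B = weight G b a B A := by
  unfold weight; ring

private lemma nbrIn_split [Fintype V] (G : SimpleGraph V) {A B : Finset V}
    (hd : Disjoint A B) (hu : A ∪ B = Finset.univ) (x : V) :
    nbrIn G A x + nbrIn G B x = G.degree x := by
  unfold nbrIn
  rw [← Finset.card_union_of_disjoint (Finset.disjoint_filter_filter hd),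
    ← Finset.filter_union, hu]
  rw [SimpleGraph.degree]
  congr 1
  ext y
  simp [SimpleGraph.mem_neighborFinset]

private lemma min_degen [Fintype V] (G : SimpleGraph V) (a b : V → ℕ)
    (ha : ∀ x : V, 2 ≤ a x)
    (hdeg : ∀ x : V, G.degree x + 1 = a x + b x)
    {A B : Finset V} (hP : IsPartition A B)
    (hmin : ∀ A' B' : Finset V, IsPartition A' B' →
      weight G a b A B ≤ weight G a b A' B') :
    IsDegenerate G (fun x => (a x : ℤ) - 1) A := by
  intro H hHA hHne
  by_contra hcon
  push_neg at hcon
  have hgood : ∀ u ∈ H, a u ≤ nbrIn G H u := by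
    intro u hu
    have := hcon u hu
    omega
  obtain ⟨u, huH⟩ := hHne
  have huA : u ∈ A := hHA huH
  obtain ⟨hdisj, _, hBne, hunion⟩ := hP
  have huB : u ∉ B := fun h => (Finset.disjoint_left.mp hdisj huA) h
  -- find another vertex of A, a neighbor of u in H
  have hnb : 2 ≤ nbrIn G H u := le_trans (ha u) (hgood u huH)
  have : (H.filter fun y => G.Adj u y).Nonempty := by
    rw [← Finset.card_pos]; unfold nbrIn at hnb; omega
  obtain ⟨y, hy⟩ := this
  rw [Finset.mem_filter] at hy
  have hyu : y ≠ u := fun h => G.irrefl (h ▸ hy.2)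
  have hyA' : y ∈ A.erase u := Finset.mem_erase.mpr ⟨hyu, hHA hy.1⟩
  set A' := A.erase u with hA'
  set B' := insert u B with hB'
  have huA' : u ∉ A' := Finset.notMem_erase u A
  have hins : insert u A' = A := Finset.insert_erase huA
  have hP' : IsPartition A' B' := by
    refine ⟨?_, ⟨y, hyA'⟩, ⟨u, Finset.mem_insert_self u B⟩, ?_⟩
    · rw [Finset.disjoint_left]
      intro x hx hx'
      rcases Finset.mem_insert.mp hx' with h | h
      · exact huA' (h ▸ hx)
      · exact Finset.disjoint_left.mp hdisj (Finset.erase_subset u A hx) h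
    · rw [hB', Finset.union_insert, ← Finset.insert_union, hins, hunion]
  -- weight computation
  have hEA : edgesIn G A = edgesIn G A' + nbrIn G A' u := by
    rw [← hins]
    exact edgesIn_insert G huA'
  have hEB : edgesIn G B' = edgesIn G B + nbrIn G B u := edgesIn_insert G huB
  have hsumA : ∑ x ∈ A, b x = (∑ x ∈ A', b x) + b u := by
    rw [← hins, Finset.sum_insert huA']; ring
  have hsumB : ∑ x ∈ B', a x = (∑ x ∈ B, a x) + a u := by
    rw [hB', Finset.sum_insert huB]; ring
  have hkey : weight G a b A B + nbrIn G B u + a u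
      = weight G a b A' B' + nbrIn G A' u + b u := by
    unfold weight
    rw [hEA, hEB, hsumA, hsumB]; ring
  -- degree facts
  have hnAu : nbrIn G A' u = nbrIn G A u := by
    rw [← hins, nbrIn_insert_self]
  have hsplit : nbrIn G A u + nbrIn G B u = G.degree u := nbrIn_split G hdisj hunion u
  have hHle : nbrIn G H u ≤ nbrIn G A u := nbrIn_mono G hHA u
  have haH : a u ≤ nbrIn G H u := hgood u huH
  have hdu : G.degree u + 1 = a u + b u := hdeg u
  have hlt : weight G a b A' B' < weight G a b A B := by omega
  exact absurd (hmin A' B' hP') (by omega)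

private lemma isPartition_symm [Fintype V] {A B : Finset V} (h : IsPartition A B) :
    IsPartition B A :=
  ⟨h.1.symm, h.2.2.1, h.2.1, by rw [Finset.union_comm]; exact h.2.2.2⟩

/-- Claim 2: under the standing hypotheses, `G` has an `(a,b)`-partition. -/
theorem exists_ab_partition [Fintype V] [Nonempty V] (G : SimpleGraph V) (a b : V → ℕ)
    (hC4 : C4Free G) (ha : ∀ x : V, 2 ≤ a x) (hb : ∀ x : V, 2 ≤ b x)
    (hdeg : ∀ x : V, G.degree x + 1 = a x + b x)
    (hnf : ¬ ∃ A B : Finset V, FeasiblePair G a b A B) :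
    ∃ A B : Finset V, ABPartition G a b A B := by
  classical
  -- there are at least two vertices
  obtain ⟨x⟩ := ‹Nonempty V›
  have hdx : 3 ≤ G.degree x := by have := hdeg x; have := ha x; have := hb x; omega
  have : 0 < G.degree x := by omega
  obtain ⟨y, hy⟩ := Finset.card_pos.mp (by rwa [SimpleGraph.degree] at this)
  rw [SimpleGraph.mem_neighborFinset] at hy
  have hxy : y ≠ x := fun h => G.irrefl (h ▸ hy)
  -- set of all partitions is nonempty
  have hex : ∃ p : Finset V × Finset V, IsPartition p.1 p.2 := by
    refine ⟨({x}, Finset.univ.erase x), ?_, ⟨x, Finset.mem_singleton_self x⟩,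
      ⟨y, Finset.mem_erase.mpr ⟨hxy, Finset.mem_univ y⟩⟩, ?_⟩
    · simp
    · ext z
      by_cases h : z = x <;> simp [h]
  -- choose a minimum weight partition
  obtain ⟨p, hp⟩ := hex
  obtain ⟨q, hq, hqmin⟩ := Finset.exists_min_image
    (Finset.univ.filter fun p : Finset V × Finset V => IsPartition p.1 p.2)
    (fun p => weight G a b p.1 p.2)
    ⟨p, Finset.mem_filter.mpr ⟨Finset.mem_univ p, hp⟩⟩
  rw [Finset.mem_filter] at hq
  have hqP : IsPartition q.1 q.2 := hq.2
  have hmin : ∀ A' B' : Finset V, IsPartition A' B' →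
      weight G a b q.1 q.2 ≤ weight G a b A' B' := by
    intro A' B' h
    exact hqmin (A', B') (Finset.mem_filter.mpr ⟨Finset.mem_univ _, h⟩)
  refine ⟨q.1, q.2, hqP, ?_, ?_⟩
  · exact min_degen G a b ha hdeg hqP hmin
  · refine min_degen G b a hb (fun x => by rw [hdeg x]; ring) (isPartition_symm hqP) ?_
    intro A' B' h
    rw [← weight_comm, ← weight_comm G a b]
    exact hmin B' A' (isPartition_symm h)
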